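/- Let E(p) = |p|² on ℝ^d, β > 0, and 0 < z < 1. Then the function R̂(p) = 2·∑_{n=1}^∞ z^n·exp(-β·n·|p|²) belongs to the Schwartz space S(ℝ^d), and its inverse Fourier transform R(x) is strictly positive for every x ∈ ℝ^d. -/

import Mathlib

open MeasureTheory Real

noncomputable section

namespace BoseAux

open Filter Set Finset
open scoped ContDiff FourierTransform RealInnerProductSpace Nat

variable {β z : ℝ}

lemma natCast_le_infty (n : ℕ) : (n : WithTop ℕ∞) ≤ ∞ := by
  exact_mod_cast le_top (α := ℕ∞) (a := (n : ℕ∞))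

/-- `u(s) = z e^{-β s}`. -/
def uf (β z : ℝ) : ℝ → ℝ := fun s => z * Real.exp (-β * s)

/-- `g(s) = 2 (1 - u(s))⁻¹`. -/
def gf (β z : ℝ) : ℝ → ℝ := fun s => 2 * (1 - uf β z s)⁻¹

/-- `φ(s) = u(s) g(s) = 2 u /(1-u)`. -/
def phif (β z : ℝ) : ℝ → ℝ := fun s => uf β z s * gf β z s

/-- Left endpoint of the domain of good behaviour. -/
def af (β z : ℝ) : ℝ := Real.log z / (2 * β)

/-- The open domain. -/
def Oz (β z : ℝ) : Set ℝ := Set.Ioi (af β z)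

section OneDim

variable (hβ : 0 < β) (hz0 : 0 < z) (hz1 : z < 1)
include hβ hz0 hz1

lemma af_neg : af β z < 0 :=
  div_neg_of_neg_of_pos (Real.log_neg hz0 hz1) (by positivity)

lemma mem_Oz {s : ℝ} (hs : 0 ≤ s) : s ∈ Oz β z :=
  lt_of_lt_of_le (af_neg hβ hz0 hz1) hs

lemma sqrt_z_lt_one : Real.sqrt z < 1 := by
  nlinarith [Real.sq_sqrt hz0.le, Real.sqrt_nonneg z]

lemma sqrt_z_eq : Real.sqrt z = Real.exp (Real.log z / 2) := by
  rw [show Real.sqrt z = z ^ (1/2 : ℝ) from Real.sqrt_eq_rpow z,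
    Real.rpow_def_of_pos hz0]
  ring_nf

lemma uf_pos (s : ℝ) : 0 < uf β z s := mul_pos hz0 (Real.exp_pos _)

lemma uf_lt_sqrt {s : ℝ} (hs : s ∈ Oz β z) : uf β z s < Real.sqrt z := by
  have hmem : af β z < s := hs
  have h1 : uf β z s < z * Real.exp (-β * af β z) :=
    mul_lt_mul_of_pos_left (Real.exp_lt_exp.2 (by nlinarith)) hz0
  have h2 : z * Real.exp (-β * af β z) = Real.sqrt z := by
    rw [sqrt_z_eq hβ hz0 hz1,
      show (-β * af β z) = -(Real.log z)/2 by rw [af]; field_simp,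
      show z = Real.exp (Real.log z) from (Real.exp_log hz0).symm, ← Real.exp_add]
    congr 1
    rw [Real.log_exp]
    ring
  linarith

lemma uf_le_one {s : ℝ} (hs : s ∈ Oz β z) : uf β z s ≤ 1 :=
  le_of_lt (lt_of_lt_of_le (uf_lt_sqrt hβ hz0 hz1 hs) (sqrt_z_lt_one hβ hz0 hz1).le)

lemma one_sub_uf_pos {s : ℝ} (hs : s ∈ Oz β z) : 0 < 1 - uf β z s := by
  have := uf_lt_sqrt hβ hz0 hz1 hs
  have := sqrt_z_lt_one hβ hz0 hz1
  linarith

omit hβ hz0 hz1 in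
lemma contDiff_uf : ContDiff ℝ ∞ (uf β z) := by
  unfold uf
  exact contDiff_const.mul (Real.contDiff_exp.comp (contDiff_const.mul contDiff_id))

lemma iteratedDeriv_uf (n : ℕ) (s : ℝ) :
    iteratedDeriv n (uf β z) s = z * ((-β) ^ n * Real.exp (-β * s)) := by
  have h1 : iteratedDeriv n (fun t : ℝ => Real.exp (-β * t)) s
      = (-β) ^ n * Real.exp (-β * s) :=
    congrFun (iteratedDeriv_exp_const_mul n (-β)) s
  have h2 : uf β z = fun t => z * (fun t' : ℝ => Real.exp (-β * t')) t := rfl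
  rw [h2, ← iteratedDerivWithin_univ,
    iteratedDerivWithin_const_mul (Set.mem_univ s) uniqueDiffOn_univ z
      ((show ContDiff ℝ (n : WithTop ℕ∞) (fun t' : ℝ => Real.exp (-β * t')) by
          exact Real.contDiff_exp.comp (contDiff_const.mul contDiff_id)).contDiffWithinAt),
    iteratedDerivWithin_univ, h1]

lemma norm_ifd_uf_eq (n : ℕ) (s : ℝ) :
    ‖iteratedFDeriv ℝ n (uf β z) s‖ = β ^ n * uf β z s := by
  rw [norm_iteratedFDeriv_eq_norm_iteratedDeriv, iteratedDeriv_uf hβ hz0 hz1,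
    Real.norm_eq_abs, abs_mul, abs_mul, abs_pow, abs_neg, abs_of_pos hβ,
    abs_of_pos hz0, Real.abs_exp, uf]
  ring

omit hβ hz0 hz1 in
lemma iteratedDeriv_two_inv_one_sub (n : ℕ) :
    ∀ w : ℝ, w < 1 →
      iteratedDeriv n (fun v : ℝ => 2 * (1 - v)⁻¹) w = 2 * n ! * ((1 - w)⁻¹) ^ (n + 1) := by
  induction n with
  | zero => intro w hw; simp
  | succ n ih =>
    intro w hw
    rw [iteratedDeriv_succ]
    have hev : iteratedDeriv n (fun v : ℝ => 2 * (1 - v)⁻¹)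
        =ᶠ[nhds w] fun v => 2 * n ! * ((1 - v)⁻¹) ^ (n + 1) := by
      filter_upwards [isOpen_Iio.mem_nhds (show w ∈ Set.Iio (1:ℝ) from hw)] with v hv
      exact ih v hv
    rw [hev.deriv_eq]
    have h0 : (0:ℝ) < 1 - w := by linarith
    have h1 : HasDerivAt (fun v : ℝ => 1 - v) (-1) w := (hasDerivAt_id w).const_sub 1
    have h2 : HasDerivAt (fun v : ℝ => (1 - v)⁻¹) ((1 - w)⁻¹ ^ 2) w := by
      have := h1.inv h0.ne'
      refine this.congr_deriv ?_
      rw [neg_neg, one_div, inv_pow]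
    have h3 : HasDerivAt (fun v : ℝ => 2 * (n ! : ℝ) * ((1 - v)⁻¹) ^ (n + 1))
        (2 * (n ! : ℝ) * (((n:ℝ) + 1) * ((1 - w)⁻¹) ^ n * ((1 - w)⁻¹ ^ 2))) w := by
      have h4 := (h2.pow (n + 1)).const_mul (2 * (n ! : ℝ))
      refine h4.congr_deriv ?_
      rw [Nat.add_sub_cancel]
      push_cast
      ring
    rw [h3.deriv, Nat.factorial_succ]
    push_cast
    ring

omit hβ hz0 hz1 in
lemma contDiffOn_two_inv_one_sub {b : ℝ} (hb : b ≤ 1) :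
    ContDiffOn ℝ ∞ (fun v : ℝ => 2 * (1 - v)⁻¹) (Set.Iio b) := by
  apply ContDiffOn.mul contDiffOn_const
  apply ContDiffOn.inv (contDiffOn_const.sub contDiffOn_id)
  intro v hv
  have hv1 : v < 1 := lt_of_lt_of_le hv hb
  have : (0:ℝ) < 1 - v := by linarith
  exact this.ne'

omit hβ hz0 hz1 in
lemma outer_bound {b : ℝ} (hb0 : 0 ≤ b) (hb : b < 1) (n : ℕ) :
    ∀ i ≤ n, ∀ w ∈ Set.Iio b,
      ‖iteratedFDerivWithin ℝ i (fun v : ℝ => 2 * (1 - v)⁻¹) (Set.Iio b) w‖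
        ≤ 2 * n ! * ((1 - b)⁻¹) ^ (n + 1) := by
  intro i hi w hw
  have hwb : w < b := hw
  have hw1 : w < 1 := lt_trans hwb hb
  rw [iteratedFDerivWithin_of_isOpen _ isOpen_Iio hw,
    norm_iteratedFDeriv_eq_norm_iteratedDeriv,
    iteratedDeriv_two_inv_one_sub i w hw1]
  have h0 : (0:ℝ) < 1 - w := by linarith
  have hb1 : (0:ℝ) < 1 - b := by linarith
  have hinv : (1 - w)⁻¹ ≤ (1 - b)⁻¹ := by
    apply inv_anti₀ hb1
    linarith
  have hinvb1 : (1:ℝ) ≤ (1 - b)⁻¹ := by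
    have := inv_anti₀ hb1 (by linarith : 1 - b ≤ 1)
    simpa using this
  have hfac : (i ! : ℝ) ≤ n ! := by exact_mod_cast Nat.factorial_le hi
  have hpow : ((1 - w)⁻¹) ^ (i + 1) ≤ ((1 - b)⁻¹) ^ (n + 1) := by
    calc ((1 - w)⁻¹) ^ (i + 1) ≤ ((1 - b)⁻¹) ^ (i + 1) :=
          pow_le_pow_left₀ (by positivity) hinv _
    _ ≤ ((1 - b)⁻¹) ^ (n + 1) := pow_le_pow_right₀ hinvb1 (by omega)
  rw [Real.norm_eq_abs, abs_of_nonneg (by positivity)]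
  calc 2 * (i ! : ℝ) * ((1 - w)⁻¹) ^ (i + 1)
      ≤ 2 * (n ! : ℝ) * ((1 - w)⁻¹) ^ (i + 1) :=
        mul_le_mul_of_nonneg_right (by linarith) (by positivity)
    _ ≤ 2 * (n ! : ℝ) * ((1 - b)⁻¹) ^ (n + 1) :=
        mul_le_mul_of_nonneg_left hpow (by positivity)

lemma contDiffOn_gf : ContDiffOn ℝ ∞ (gf β z) (Oz β z) := by
  unfold gf
  apply ContDiffOn.mul contDiffOn_const
  apply ContDiffOn.inv (contDiffOn_const.sub contDiff_uf.contDiffOn)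
  intro s hs
  exact (one_sub_uf_pos hβ hz0 hz1 hs).ne'

lemma contDiffOn_phif : ContDiffOn ℝ ∞ (phif β z) (Oz β z) :=
  ContDiffOn.mul contDiff_uf.contDiffOn (contDiffOn_gf hβ hz0 hz1)

/-- Constant bounding derivatives of `gf`. -/
def CG (β z : ℝ) (n : ℕ) : ℝ :=
  n ! * (2 * n ! * ((1 - Real.sqrt z)⁻¹) ^ (n + 1)) * (max 1 β) ^ n

lemma CG_nonneg (n : ℕ) : 0 ≤ CG β z n := by
  have h1 : (0:ℝ) < 1 - Real.sqrt z := by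
    have := sqrt_z_lt_one hβ hz0 hz1; linarith
  have h2 : (0:ℝ) < max 1 β := lt_max_of_lt_left one_pos
  unfold CG
  positivity

lemma gf_bound (n : ℕ) :
    ∀ s ∈ Oz β z, ‖iteratedFDerivWithin ℝ n (gf β z) (Oz β z) s‖ ≤ CG β z n := by
  intro s hs
  have hsq1 : Real.sqrt z < 1 := sqrt_z_lt_one hβ hz0 hz1
  have hgfc : gf β z = (fun v : ℝ => 2 * (1 - v)⁻¹) ∘ (uf β z) := rfl
  rw [hgfc]
  refine norm_iteratedFDerivWithin_comp_le (t := Set.Iio (Real.sqrt z)) (N := (∞ : WithTop ℕ∞))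
    (contDiffOn_two_inv_one_sub hsq1.le) contDiff_uf.contDiffOn (natCast_le_infty _)
    isOpen_Iio.uniqueDiffOn isOpen_Ioi.uniqueDiffOn (fun t ht => uf_lt_sqrt hβ hz0 hz1 ht) hs
    (fun i hi => outer_bound (Real.sqrt_nonneg z) hsq1 n i hi _
      (uf_lt_sqrt hβ hz0 hz1 hs)) ?_
  intro i hi1 hin
  rw [iteratedFDerivWithin_of_isOpen _ isOpen_Ioi hs, norm_ifd_uf_eq hβ hz0 hz1]
  calc β ^ i * uf β z s ≤ β ^ i * 1 :=
        mul_le_mul_of_nonneg_left (uf_le_one hβ hz0 hz1 hs) (by positivity)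
    _ ≤ (max 1 β) ^ i := by
        rw [mul_one]
        exact pow_le_pow_left₀ hβ.le (le_max_right 1 β) i

/-- Constant for the derivative bounds of `phif`. -/
def Cphi (β z : ℝ) (n : ℕ) : ℝ :=
  (∑ i ∈ Finset.range (n + 1), (n.choose i : ℝ) * β ^ i) *
    (∑ j ∈ Finset.range (n + 1), CG β z j)

lemma Cphi_nonneg (n : ℕ) : 0 ≤ Cphi β z n := by
  apply mul_nonneg
  · apply Finset.sum_nonneg
    intro i _
    positivity
  · exact Finset.sum_nonneg fun j _ => CG_nonneg hβ hz0 hz1 j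

lemma phif_bound (n : ℕ) :
    ∀ s : ℝ, 0 ≤ s →
      ‖iteratedFDerivWithin ℝ n (phif β z) (Oz β z) s‖ ≤ Cphi β z n * Real.exp (-β * s) := by
  intro s hs0
  have hs : s ∈ Oz β z := mem_Oz hβ hz0 hz1 hs0
  have h := norm_iteratedFDerivWithin_mul_le (𝕜 := ℝ) (A := ℝ)
    (f := uf β z) (g := gf β z) contDiff_uf.contDiffOn (contDiffOn_gf hβ hz0 hz1) isOpen_Ioi.uniqueDiffOn hs
    (natCast_le_infty n)
  have hphi : phif β z = fun x => uf β z x * gf β z x := rfl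
  rw [hphi]
  refine le_trans h ?_
  have hstep : ∀ i ∈ Finset.range (n + 1),
      (n.choose i : ℝ) * ‖iteratedFDerivWithin ℝ i (uf β z) (Oz β z) s‖ *
          ‖iteratedFDerivWithin ℝ (n - i) (gf β z) (Oz β z) s‖
        ≤ ((n.choose i : ℝ) * β ^ i) *
          (∑ j ∈ Finset.range (n + 1), CG β z j) * Real.exp (-β * s) := by
    intro i hi
    have hiu : ‖iteratedFDerivWithin ℝ i (uf β z) (Oz β z) s‖ ≤ β ^ i * Real.exp (-β * s) := by
      rw [show Oz β z = Set.Ioi (af β z) from rfl] at hs ⊢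
      rw [iteratedFDerivWithin_of_isOpen _ isOpen_Ioi hs, norm_ifd_uf_eq hβ hz0 hz1, uf]
      have : z * Real.exp (-β * s) ≤ Real.exp (-β * s) :=
        mul_le_of_le_one_left (Real.exp_pos _).le hz1.le
      nlinarith [pow_nonneg hβ.le i]
    have hig : ‖iteratedFDerivWithin ℝ (n - i) (gf β z) (Oz β z) s‖
        ≤ ∑ j ∈ Finset.range (n + 1), CG β z j := by
      refine le_trans (gf_bound hβ hz0 hz1 (n - i) s hs) ?_
      refine Finset.single_le_sum (fun j _ => CG_nonneg hβ hz0 hz1 j) ?_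
      simp only [Finset.mem_range]
      omega
    calc (n.choose i : ℝ) * ‖iteratedFDerivWithin ℝ i (uf β z) (Oz β z) s‖ *
          ‖iteratedFDerivWithin ℝ (n - i) (gf β z) (Oz β z) s‖
        ≤ (n.choose i : ℝ) * (β ^ i * Real.exp (-β * s)) *
          (∑ j ∈ Finset.range (n + 1), CG β z j) := by
          apply mul_le_mul
          · exact mul_le_mul_of_nonneg_left hiu (by positivity)
          · exact hig
          · positivity
          · positivity
      _ = ((n.choose i : ℝ) * β ^ i) * (∑ j ∈ Finset.range (n + 1), CG β z j) *
            Real.exp (-β * s) := by ring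
  refine le_trans (Finset.sum_le_sum hstep) ?_
  rw [← Finset.sum_mul, ← Finset.sum_mul, Cphi]

end OneDim

section Euclid

variable {d : ℕ} (hβ : 0 < β) (hz0 : 0 < z) (hz1 : z < 1)

/-- iterated derivatives of the identity are bounded by `1 + ‖p‖`. -/
lemma norm_ifd_id_le (j : ℕ) (p : EuclideanSpace ℝ (Fin d)) :
    ‖iteratedFDeriv ℝ j (fun q : EuclideanSpace ℝ (Fin d) => q) p‖ ≤ 1 + ‖p‖ := by
  match j with
  | 0 =>
    rw [norm_iteratedFDeriv_zero]
    linarith [norm_nonneg p]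
  | (m + 1) =>
    have hf : fderiv ℝ (fun q : EuclideanSpace ℝ (Fin d) => q)
        = fun _ => ContinuousLinearMap.id ℝ (EuclideanSpace ℝ (Fin d)) :=
      funext fun x => fderiv_id'
    rw [← norm_iteratedFDeriv_fderiv, hf]
    match m with
    | 0 =>
      rw [norm_iteratedFDeriv_zero]
      have : ‖ContinuousLinearMap.id ℝ (EuclideanSpace ℝ (Fin d))‖ ≤ 1 :=
        ContinuousLinearMap.norm_id_le
      linarith [norm_nonneg p]
    | (m' + 1) =>
      rw [iteratedFDeriv_const_of_ne (Nat.succ_ne_zero m')]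
      simp
      linarith [norm_nonneg p]

lemma normsq_ifd_le (n : ℕ) (p : EuclideanSpace ℝ (Fin d)) :
    ‖iteratedFDeriv ℝ n (fun q : EuclideanSpace ℝ (Fin d) => ‖q‖ ^ 2) p‖
      ≤ 2 ^ n * (1 + ‖p‖) ^ 2 := by
  have hq : (fun q : EuclideanSpace ℝ (Fin d) => ‖q‖ ^ 2)
      = fun q => (innerSL ℝ (E := EuclideanSpace ℝ (Fin d)))
          ((fun q' : EuclideanSpace ℝ (Fin d) => q') q)
          ((fun q' : EuclideanSpace ℝ (Fin d) => q') q) :=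
    funext fun q => (real_inner_self_eq_norm_sq q).symm
  rw [hq]
  refine le_trans (ContinuousLinearMap.norm_iteratedFDeriv_le_of_bilinear
    (innerSL ℝ) contDiff_id contDiff_id p (natCast_le_infty n)) ?_
  have hB : ‖innerSL ℝ (E := EuclideanSpace ℝ (Fin d))‖ ≤ 1 := norm_innerSL_le ℝ
  have hsum : ∑ i ∈ Finset.range (n + 1), (n.choose i : ℝ) *
        ‖iteratedFDeriv ℝ i (fun q : EuclideanSpace ℝ (Fin d) => q) p‖ *
        ‖iteratedFDeriv ℝ (n - i) (fun q : EuclideanSpace ℝ (Fin d) => q) p‖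
      ≤ ∑ i ∈ Finset.range (n + 1), (n.choose i : ℝ) * ((1 + ‖p‖) * (1 + ‖p‖)) := by
    apply Finset.sum_le_sum
    intro i _
    have h1 := norm_ifd_id_le (d := d) i p
    have h2 := norm_ifd_id_le (d := d) (n - i) p
    have hp : (0:ℝ) ≤ 1 + ‖p‖ := by linarith [norm_nonneg p]
    calc (n.choose i : ℝ) *
          ‖iteratedFDeriv ℝ i (fun q : EuclideanSpace ℝ (Fin d) => q) p‖ *
          ‖iteratedFDeriv ℝ (n - i) (fun q : EuclideanSpace ℝ (Fin d) => q) p‖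
        ≤ (n.choose i : ℝ) * (1 + ‖p‖) * (1 + ‖p‖) := by
          apply mul_le_mul
          · exact mul_le_mul_of_nonneg_left h1 (by positivity)
          · exact h2
          · positivity
          · positivity
      _ = (n.choose i : ℝ) * ((1 + ‖p‖) * (1 + ‖p‖)) := by ring
  have hchoose : ∑ i ∈ Finset.range (n + 1), (n.choose i : ℝ) *
      ((1 + ‖p‖) * (1 + ‖p‖)) = 2 ^ n * (1 + ‖p‖) ^ 2 := by
    rw [← Finset.sum_mul]
    have : ∑ i ∈ Finset.range (n + 1), (n.choose i : ℝ) = 2 ^ n := by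
      exact_mod_cast congrArg (Nat.cast (R := ℝ)) (Nat.sum_range_choose n)
    rw [this]
    ring
  have hp : (0:ℝ) ≤ 1 + ‖p‖ := by linarith [norm_nonneg p]
  calc ‖innerSL ℝ (E := EuclideanSpace ℝ (Fin d))‖ * ∑ i ∈ Finset.range (n + 1),
        (n.choose i : ℝ) *
        ‖iteratedFDeriv ℝ i (fun q : EuclideanSpace ℝ (Fin d) => q) p‖ *
        ‖iteratedFDeriv ℝ (n - i) (fun q : EuclideanSpace ℝ (Fin d) => q) p‖
      ≤ 1 * ∑ i ∈ Finset.range (n + 1), (n.choose i : ℝ) * ((1 + ‖p‖) * (1 + ‖p‖)) := by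
        apply mul_le_mul hB hsum ?_ zero_le_one
        apply Finset.sum_nonneg
        intro i _
        positivity
    _ = 2 ^ n * (1 + ‖p‖) ^ 2 := by rw [one_mul, hchoose]

lemma normsq_hD {i : ℕ} (h1 : 1 ≤ i) (p : EuclideanSpace ℝ (Fin d)) :
    ‖iteratedFDeriv ℝ i (fun q : EuclideanSpace ℝ (Fin d) => ‖q‖ ^ 2) p‖
      ≤ (2 * (1 + ‖p‖) ^ 2) ^ i := by
  have hp1 : (1:ℝ) ≤ (1 + ‖p‖) ^ 2 := by nlinarith [norm_nonneg p]
  refine le_trans (normsq_ifd_le i p) ?_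
  rw [mul_pow]
  apply mul_le_mul_of_nonneg_left ?_ (by positivity)
  calc (1 + ‖p‖) ^ 2 = ((1 + ‖p‖) ^ 2) ^ 1 := (pow_one _).symm
    _ ≤ ((1 + ‖p‖) ^ 2) ^ i := pow_le_pow_right₀ hp1 h1

/-- key sup bound : polynomial times gaussian is bounded. -/
lemma poly_le_exp {c : ℝ} (hc : 0 < c) (m : ℕ) :
    ∃ M : ℝ, ∀ t : ℝ, 0 ≤ t → (1 + t) ^ m * Real.exp (-(c * t ^ 2)) ≤ M := by
  have key : ∀ x : ℝ, 0 ≤ x → (1 + x) ^ m ≤ 2 ^ m * m ! * Real.exp x := by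
    intro x hx
    rw [add_pow]
    have hterm : ∀ i ∈ Finset.range (m + 1),
        (1:ℝ) ^ i * x ^ (m - i) * (m.choose i : ℝ)
          ≤ (m.choose i : ℝ) * ((m ! : ℝ) * Real.exp x) := by
      intro i hi
      have hmi : m - i ≤ m := Nat.sub_le m i
      have h1 : x ^ (m - i) ≤ ((m - i) ! : ℝ) * Real.exp x := by
        have h2 : x ^ (m - i) / ((m - i)! : ℝ) ≤ Real.exp x := by
          refine le_trans ?_ (Real.sum_le_exp_of_nonneg hx (m - i + 1))
          refine Finset.single_le_sum (f := fun j => x ^ j / (j ! : ℝ)) ?_ ?_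
          · intro j _; positivity
          · simp
        rw [div_le_iff₀ (by positivity)] at h2
        linarith [h2]
      have h3 : ((m - i)! : ℝ) ≤ (m ! : ℝ) := by exact_mod_cast Nat.factorial_le hmi
      have h4 : x ^ (m - i) ≤ (m ! : ℝ) * Real.exp x := by
        refine le_trans h1 ?_
        exact mul_le_mul_of_nonneg_right h3 (Real.exp_pos x).le
      rw [one_pow, one_mul]
      calc x ^ (m - i) * (m.choose i : ℝ) ≤ ((m ! : ℝ) * Real.exp x) * (m.choose i : ℝ) :=
            mul_le_mul_of_nonneg_right h4 (by positivity)
        _ = (m.choose i : ℝ) * ((m ! : ℝ) * Real.exp x) := by ring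
    refine le_trans (Finset.sum_le_sum hterm) ?_
    rw [← Finset.sum_mul]
    have : ∑ i ∈ Finset.range (m + 1), (m.choose i : ℝ) = 2 ^ m := by
      exact_mod_cast congrArg (Nat.cast (R := ℝ)) (Nat.sum_range_choose m)
    rw [this]
    ring_nf
    exact le_refl _
  set K := max 1 c⁻¹ with hK
  have hK1 : (1:ℝ) ≤ K := le_max_left _ _
  have hKc : (1:ℝ) ≤ K * c := by
    have : c⁻¹ ≤ K := le_max_right _ _
    calc (1:ℝ) = c⁻¹ * c := by field_simp
      _ ≤ K * c := mul_le_mul_of_nonneg_right this hc.le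
  refine ⟨2 ^ m * K ^ m * (2 ^ m * m !), ?_⟩
  intro t ht
  have e1 : (1 + t) ^ m ≤ 2 ^ m * (1 + t ^ 2) ^ m := by
    rw [← mul_pow]
    apply pow_le_pow_left₀ (by linarith)
    nlinarith
  have e2 : (1 + t ^ 2) ^ m ≤ K ^ m * (1 + c * t ^ 2) ^ m := by
    rw [← mul_pow]
    apply pow_le_pow_left₀ (by positivity)
    have h5 : (0:ℝ) ≤ c * t ^ 2 := by positivity
    nlinarith
  have e3 : (1 + c * t ^ 2) ^ m ≤ 2 ^ m * m ! * Real.exp (c * t ^ 2) :=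
    key (c * t ^ 2) (by positivity)
  have epos := Real.exp_pos (-(c * t ^ 2))
  have hcancel : Real.exp (c * t ^ 2) * Real.exp (-(c * t ^ 2)) = 1 := by
    rw [← Real.exp_add]; simp
  have etotal : (1 + t) ^ m ≤ 2 ^ m * K ^ m * (2 ^ m * m !) * Real.exp (c * t ^ 2) := by
    calc (1 + t) ^ m ≤ 2 ^ m * (1 + t ^ 2) ^ m := e1
      _ ≤ 2 ^ m * (K ^ m * (1 + c * t ^ 2) ^ m) :=
          mul_le_mul_of_nonneg_left e2 (by positivity)
      _ ≤ 2 ^ m * (K ^ m * (2 ^ m * m ! * Real.exp (c * t ^ 2))) := by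
          apply mul_le_mul_of_nonneg_left ?_ (by positivity)
          exact mul_le_mul_of_nonneg_left e3 (by positivity)
      _ = 2 ^ m * K ^ m * (2 ^ m * m !) * Real.exp (c * t ^ 2) := by ring
  calc (1 + t) ^ m * Real.exp (-(c * t ^ 2))
      ≤ (2 ^ m * K ^ m * (2 ^ m * m !) * Real.exp (c * t ^ 2)) * Real.exp (-(c * t ^ 2)) :=
        mul_le_mul_of_nonneg_right etotal epos.le
    _ = 2 ^ m * K ^ m * (2 ^ m * m !) * (Real.exp (c * t ^ 2) * Real.exp (-(c * t ^ 2))) := by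
        ring
    _ = 2 ^ m * K ^ m * (2 ^ m * m !) := by rw [hcancel, mul_one]

include hβ hz0 hz1

/-- The composed function is smooth. -/
lemma Phi_contDiff : ContDiff ℝ ∞ (fun p : EuclideanSpace ℝ (Fin d) => phif β z (‖p‖ ^ 2)) := by
  have h1 : ContDiff ℝ ∞ (fun p : EuclideanSpace ℝ (Fin d) => z * Real.exp (-β * ‖p‖ ^ 2)) := by
    apply contDiff_const.mul
    exact Real.contDiff_exp.comp (contDiff_const.mul (contDiff_norm_sq ℝ))
  have h2 : ∀ p : EuclideanSpace ℝ (Fin d), 1 - z * Real.exp (-β * ‖p‖ ^ 2) ≠ 0 := by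
    intro p
    have h3 : Real.exp (-β * ‖p‖ ^ 2) ≤ 1 := by
      rw [Real.exp_le_one_iff]
      nlinarith [sq_nonneg ‖p‖]
    have h4 : z * Real.exp (-β * ‖p‖ ^ 2) ≤ z :=
      mul_le_of_le_one_right hz0.le h3
    have : (0:ℝ) < 1 - z * Real.exp (-β * ‖p‖ ^ 2) := by linarith
    exact this.ne'
  have : (fun p : EuclideanSpace ℝ (Fin d) => phif β z (‖p‖ ^ 2))
      = fun p => (z * Real.exp (-β * ‖p‖ ^ 2)) *
          (2 * (1 - z * Real.exp (-β * ‖p‖ ^ 2))⁻¹) := rfl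
  rw [this]
  exact h1.mul (contDiff_const.mul ((contDiff_const.sub h1).inv h2))

lemma Phi_decay (k n : ℕ) :
    ∃ C : ℝ, ∀ p : EuclideanSpace ℝ (Fin d),
      ‖p‖ ^ k * ‖iteratedFDeriv ℝ n (fun p : EuclideanSpace ℝ (Fin d) => phif β z (‖p‖ ^ 2)) p‖
        ≤ C := by
  obtain ⟨M, hM⟩ := poly_le_exp hβ (k + 2 * n)
  set S := ∑ i ∈ Finset.range (n + 1), Cphi β z i with hS
  have hS0 : 0 ≤ S := Finset.sum_nonneg fun i _ => Cphi_nonneg hβ hz0 hz1 i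
  refine ⟨(n ! : ℝ) * S * 2 ^ n * M, ?_⟩
  intro p
  have hcomp : ‖iteratedFDeriv ℝ n
      (fun p : EuclideanSpace ℝ (Fin d) => phif β z (‖p‖ ^ 2)) p‖
      ≤ (n ! : ℝ) * (S * Real.exp (-β * ‖p‖ ^ 2)) * (2 * (1 + ‖p‖) ^ 2) ^ n := by
    have hid : (fun p : EuclideanSpace ℝ (Fin d) => phif β z (‖p‖ ^ 2))
        = (phif β z) ∘ (fun p : EuclideanSpace ℝ (Fin d) => ‖p‖ ^ 2) := rfl
    rw [hid, ← iteratedFDerivWithin_univ]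
    refine norm_iteratedFDerivWithin_comp_le (t := Oz β z) (N := (∞ : WithTop ℕ∞))
      (contDiffOn_phif hβ hz0 hz1) (contDiff_norm_sq ℝ).contDiffOn (natCast_le_infty _)
      isOpen_Ioi.uniqueDiffOn uniqueDiffOn_univ
      (fun q _ => mem_Oz hβ hz0 hz1 (by positivity)) (Set.mem_univ p) ?_ ?_
    · intro i hi
      have h1 := phif_bound hβ hz0 hz1 i (‖p‖ ^ 2) (by positivity)
      refine le_trans h1 ?_
      apply mul_le_mul_of_nonneg_right ?_ (Real.exp_pos _).le
      refine Finset.single_le_sum (fun j _ => Cphi_nonneg hβ hz0 hz1 j) ?_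
      simp only [Finset.mem_range]
      omega
    · intro i hi1 hin
      rw [iteratedFDerivWithin_univ]
      exact normsq_hD hi1 p
  have hppos : (0:ℝ) ≤ 1 + ‖p‖ := by linarith [norm_nonneg p]
  have hkb : ‖p‖ ^ k ≤ (1 + ‖p‖) ^ k := pow_le_pow_left₀ (norm_nonneg p) (by linarith) k
  have hMp := hM ‖p‖ (norm_nonneg p)
  have hnorm0 : (0:ℝ) ≤ ‖iteratedFDeriv ℝ n
      (fun p : EuclideanSpace ℝ (Fin d) => phif β z (‖p‖ ^ 2)) p‖ := norm_nonneg _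
  calc ‖p‖ ^ k * ‖iteratedFDeriv ℝ n
        (fun p : EuclideanSpace ℝ (Fin d) => phif β z (‖p‖ ^ 2)) p‖
      ≤ (1 + ‖p‖) ^ k * ((n ! : ℝ) * (S * Real.exp (-β * ‖p‖ ^ 2)) *
          (2 * (1 + ‖p‖) ^ 2) ^ n) := by
        apply mul_le_mul hkb hcomp hnorm0 (by positivity)
    _ = (n ! : ℝ) * S * 2 ^ n * ((1 + ‖p‖) ^ (k + 2 * n) *
          Real.exp (-(β * ‖p‖ ^ 2))) := by
        rw [mul_pow, pow_add, pow_mul, ← pow_mul]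
        ring_nf
    _ ≤ (n ! : ℝ) * S * 2 ^ n * M := by
        apply mul_le_mul_of_nonneg_left ?_ (by positivity)
        exact hMp

/-- The Schwartz function. -/
def RS (d : ℕ) (hβ : 0 < β) (hz0 : 0 < z) (hz1 : z < 1) :
    SchwartzMap (EuclideanSpace ℝ (Fin d)) ℝ :=
  { toFun := fun p => phif β z (‖p‖ ^ 2)
    smooth' := Phi_contDiff hβ hz0 hz1
    decay' := fun k n => Phi_decay hβ hz0 hz1 k n }

omit hβ hz0 hz1 in
lemma RS_apply (p : EuclideanSpace ℝ (Fin d)) (hβ : 0 < β) (hz0 : 0 < z) (hz1 : z < 1) :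
    RS d hβ hz0 hz1 p = phif β z (‖p‖ ^ 2) := rfl

end Euclid

section TsumId

variable (hβ : 0 < β) (hz0 : 0 < z) (hz1 : z < 1)
include hβ hz0 hz1

lemma phif_eq_tsum (t : ℝ) (ht : 0 ≤ t) :
    phif β z t = 2 * ∑' n : ℕ, z ^ (n + 1) * Real.exp (-β * ((n : ℝ) + 1) * t) := by
  set r := z * Real.exp (-β * t) with hr
  have hr0 : 0 ≤ r := by positivity
  have hr1 : r < 1 := by
    have h3 : Real.exp (-β * t) ≤ 1 := by
      rw [Real.exp_le_one_iff]
      nlinarith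
    nlinarith
  have hterm : ∀ n : ℕ, z ^ (n + 1) * Real.exp (-β * ((n : ℝ) + 1) * t) = r ^ (n + 1) := by
    intro n
    rw [hr, mul_pow, ← Real.exp_nat_mul]
    congr 2
    push_cast
    ring
  rw [tsum_congr hterm]
  have hgeo : ∑' n : ℕ, r ^ (n + 1) = (1 - r)⁻¹ * r := by
    have h1 : ∀ n : ℕ, r ^ (n + 1) = r ^ n * r := fun n => pow_succ r n
    rw [tsum_congr h1, tsum_mul_right, tsum_geometric_of_lt_one hr0 hr1]
  rw [hgeo, phif, gf, uf]
  have : uf β z t = r := rfl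
  rw [show z * Real.exp (-β * t) = r from rfl]
  ring

end TsumId

section Fourier

variable {d : ℕ} (hβ : 0 < β) (hz0 : 0 < z) (hz1 : z < 1)
include hβ hz0 hz1

lemma fourier_pos (R : SchwartzMap (EuclideanSpace ℝ (Fin d)) ℝ)
    (hR : ∀ p, R p = 2 * ∑' n : ℕ, z ^ (n + 1) * Real.exp (-β * ((n : ℝ) + 1) * ‖p‖ ^ 2))
    (x : EuclideanSpace ℝ (Fin d)) :
    0 < (FourierTransformInv.fourierInv (fun p => ((R p : ℝ) : ℂ)) x).re := by
  set y : EuclideanSpace ℝ (Fin d) := -x with hy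
  set b : ℕ → ℝ := fun n => β * ((n : ℝ) + 1) with hb
  have hbpos : ∀ n : ℕ, 0 < b n := by
    intro n
    have : (0:ℝ) < (n : ℝ) + 1 := by positivity
    exact mul_pos hβ this
  -- the summands
  set H : ℕ → EuclideanSpace ℝ (Fin d) → ℂ := fun n v =>
    𝐞 (-⟪v, y⟫) • (((2 * z ^ (n + 1) * Real.exp (-(b n) * ‖v‖ ^ 2) : ℝ)) : ℂ) with hH
  -- real-valued integrands
  have hfn_int : ∀ n : ℕ, Integrable
      (fun v : EuclideanSpace ℝ (Fin d) =>
        (((2 * z ^ (n + 1) * Real.exp (-(b n) * ‖v‖ ^ 2) : ℝ)) : ℂ)) := by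
    intro n
    have hbase : Integrable (fun v : EuclideanSpace ℝ (Fin d) =>
        Real.exp (-(b n) * ‖v‖ ^ 2)) := by
      have hc := GaussianFourier.integrable_cexp_neg_mul_sq_norm_add
        (b := ((b n : ℝ) : ℂ)) (by simpa using hbpos n) 0
        (0 : EuclideanSpace ℝ (Fin d))
      have hnorm := hc.norm
      refine hnorm.congr ?_
      filter_upwards with v
      rw [show (-(b n : ℂ) * (‖v‖:ℂ) ^ 2 + 0 * ((⟪(0 : EuclideanSpace ℝ (Fin d)), v⟫ : ℝ) : ℂ))
          = ((-(b n) * ‖v‖ ^ 2 : ℝ) : ℂ) by push_cast; ring]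
      rw [Complex.norm_exp, Complex.ofReal_re]
    have := (hbase.const_mul (2 * z ^ (n + 1))).ofReal (𝕜 := ℂ)
    refine this.congr ?_
    filter_upwards with v
    norm_num
  have hH_int : ∀ n : ℕ, Integrable (H n) := by
    intro n
    exact (Real.fourierIntegral_convergent_iff y).2 (hfn_int n)
  -- norm of the summands
  have hH_norm : ∀ n v, ‖H n v‖ = 2 * z ^ (n + 1) * Real.exp (-(b n) * ‖v‖ ^ 2) := by
    intro n v
    rw [hH]
    simp only [Circle.smul_def, smul_eq_mul, norm_mul]
    have h1 : ‖((𝐞 (-⟪v, y⟫) : Circle) : ℂ)‖ = 1 := Circle.norm_coe _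
    rw [h1, one_mul, Complex.norm_real, Real.norm_eq_abs, abs_of_nonneg (by positivity)]
  -- value of the integral of norms
  have hdim : Module.finrank ℝ (EuclideanSpace ℝ (Fin d)) = d := finrank_euclideanSpace_fin
  have hH_norm_int : ∀ n : ℕ, ∫ v, ‖H n v‖
      = 2 * z ^ (n + 1) * (π / b n) ^ ((d : ℝ) / 2) := by
    intro n
    have : (fun v : EuclideanSpace ℝ (Fin d) => ‖H n v‖)
        = fun v => 2 * z ^ (n + 1) * Real.exp (-(b n) * ‖v‖ ^ 2) := funext (hH_norm n)
    rw [this, MeasureTheory.integral_const_mul,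
      GaussianFourier.integral_rexp_neg_mul_sq_norm (hbpos n), hdim]
  -- summability of the integrals of norms
  have hsummable_norm : Summable (fun n : ℕ => ∫ v, ‖H n v‖) := by
    have hbound : ∀ n : ℕ, ∫ v, ‖H n v‖ ≤ (2 * z * (π / β) ^ ((d : ℝ) / 2)) * z ^ n := by
      intro n
      rw [hH_norm_int n]
      have hbn : (0:ℝ) < b n := hbpos n
      have hβbn : β ≤ b n := by
        have h0n : (0:ℝ) ≤ (n:ℝ) := Nat.cast_nonneg n
        show β ≤ β * ((n:ℝ) + 1)
        nlinarith
      have h1 : (π / b n) ^ ((d : ℝ) / 2) ≤ (π / β) ^ ((d : ℝ) / 2) := by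
        refine Real.rpow_le_rpow (le_of_lt (div_pos Real.pi_pos hbn)) ?_ (by positivity)
        exact div_le_div_of_nonneg_left Real.pi_pos.le hβ hβbn
      have h2 : z ^ (n + 1) = z * z ^ n := by ring
      rw [h2]
      calc 2 * (z * z ^ n) * (π / b n) ^ ((d : ℝ) / 2)
          ≤ 2 * (z * z ^ n) * (π / β) ^ ((d : ℝ) / 2) :=
            mul_le_mul_of_nonneg_left h1 (by positivity)
        _ = (2 * z * (π / β) ^ ((d : ℝ) / 2)) * z ^ n := by ring
    apply Summable.of_nonneg_of_le
      (fun n => integral_nonneg fun v => norm_nonneg _) hbound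
    exact (summable_geometric_of_lt_one hz0.le hz1).mul_left _
  -- the pointwise tsum identity
  have hpt : ∀ v : EuclideanSpace ℝ (Fin d),
      𝐞 (-⟪v, y⟫) • ((R v : ℝ) : ℂ) = ∑' n : ℕ, H n v := by
    intro v
    rw [hR v, hH]
    have hreal : 2 * ∑' n : ℕ, z ^ (n + 1) * Real.exp (-β * ((n : ℝ) + 1) * ‖v‖ ^ 2)
        = ∑' n : ℕ, 2 * z ^ (n + 1) * Real.exp (-(b n) * ‖v‖ ^ 2) := by
      rw [← tsum_mul_left]
      apply tsum_congr
      intro n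
      have harg : -β * ((n : ℝ) + 1) * ‖v‖ ^ 2 = -(b n) * ‖v‖ ^ 2 := by
        show _ = -(β * ((n : ℝ) + 1)) * ‖v‖ ^ 2
        ring
      rw [harg]
      ring
    have hofreal : ((2 * ∑' n : ℕ, z ^ (n + 1) *
          Real.exp (-β * ((n : ℝ) + 1) * ‖v‖ ^ 2) : ℝ) : ℂ)
        = ∑' n : ℕ, ((2 * z ^ (n + 1) * Real.exp (-(b n) * ‖v‖ ^ 2) : ℝ) : ℂ) := by
      rw [hreal, Complex.ofReal_tsum]
    rw [hofreal, Circle.smul_def, smul_eq_mul, ← tsum_mul_left]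
    apply tsum_congr
    intro n
    show ((𝐞 (-⟪v, y⟫) : Circle) : ℂ) * _ = 𝐞 (-⟪v, y⟫) • (((2 * z ^ (n + 1) *
      Real.exp (-(b n) * ‖v‖ ^ 2) : ℝ)) : ℂ)
    rw [Circle.smul_def, smul_eq_mul]
  -- swap integral and sum
  have hswap : FourierTransformInv.fourierInv (fun p => ((R p : ℝ) : ℂ)) x
      = ∑' n : ℕ, ∫ v, H n v := by
    rw [Real.fourierInv_eq_fourier_neg, Real.fourier_eq, ← hy]
    rw [show (fun v : EuclideanSpace ℝ (Fin d) => 𝐞 (-⟪v, y⟫) • ((R v : ℝ) : ℂ))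
        = fun v => ∑' n : ℕ, H n v from funext hpt]
    have hmeas : ∀ n : ℕ, AEStronglyMeasurable (H n) volume :=
      fun n => (hH_int n).aestronglyMeasurable
    have hlin : ∑' n : ℕ, ∫⁻ v, (‖H n v‖₊ : ENNReal) ∂volume ≠ ⊤ := by
      have heq : ∀ n : ℕ, ∫⁻ v, (‖H n v‖₊ : ENNReal) ∂volume
          = ENNReal.ofReal (∫ v, ‖H n v‖) :=
        fun n => (MeasureTheory.ofReal_integral_norm_eq_lintegral_enorm (hH_int n)).symm
      rw [tsum_congr heq, ← ENNReal.ofReal_tsum_of_nonneg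
        (fun n => integral_nonneg fun v => norm_nonneg _) hsummable_norm]
      exact ENNReal.ofReal_ne_top
    exact MeasureTheory.integral_tsum hmeas hlin
  -- the values of the individual integrals
  set t : ℕ → ℝ := fun n => 2 * z ^ (n + 1) * (π / b n) ^ ((d : ℝ) / 2) *
      Real.exp (-π ^ 2 * ‖y‖ ^ 2 / b n) with ht
  have htpos : ∀ n : ℕ, 0 < t n := by
    intro n
    have h1 : (0:ℝ) < (π / b n) ^ ((d : ℝ) / 2) :=
      Real.rpow_pos_of_pos (div_pos Real.pi_pos (hbpos n)) _
    exact mul_pos (mul_pos (mul_pos two_pos (pow_pos hz0 (n + 1))) h1) (Real.exp_pos _)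
  have hint : ∀ n : ℕ, ∫ v, H n v = ((t n : ℝ) : ℂ) := by
    intro n
    have hsmul : ∀ v : EuclideanSpace ℝ (Fin d),
        H n v = ((2 * z ^ (n + 1) : ℝ) : ℂ) *
          (𝐞 (-⟪v, y⟫) • Complex.exp (-((b n : ℝ) : ℂ) * (‖v‖ : ℂ) ^ 2)) := by
      intro v
      show 𝐞 (-⟪v, y⟫) • (((2 * z ^ (n + 1) * Real.exp (-(b n) * ‖v‖ ^ 2) : ℝ)) : ℂ) = _
      rw [Circle.smul_def, smul_eq_mul, Circle.smul_def, smul_eq_mul]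
      rw [Complex.ofReal_mul, Complex.ofReal_exp]
      push_cast
      ring
    rw [show H n = fun v : EuclideanSpace ℝ (Fin d) => ((2 * z ^ (n + 1) : ℝ) : ℂ) *
        (𝐞 (-⟪v, y⟫) • Complex.exp (-((b n : ℝ) : ℂ) * (‖v‖ : ℂ) ^ 2)) from funext hsmul]
    rw [MeasureTheory.integral_const_mul]
    have hF : ∫ v, 𝐞 (-⟪v, y⟫) • Complex.exp (-((b n : ℝ) : ℂ) * (‖v‖ : ℂ) ^ 2)
        = 𝓕 (fun v : EuclideanSpace ℝ (Fin d) =>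
            Complex.exp (-((b n : ℝ) : ℂ) * (‖v‖ : ℂ) ^ 2)) y := rfl
    rw [hF, fourier_gaussian_innerProductSpace (by simpa using hbpos n) y, hdim]
    have hcpow : ((π : ℂ) / ((b n : ℝ) : ℂ)) ^ (((d : ℕ) : ℂ) / 2)
        = (((π / b n) ^ ((d : ℝ) / 2) : ℝ) : ℂ) := by
      rw [← Complex.ofReal_div,
        Complex.ofReal_cpow (le_of_lt (div_pos Real.pi_pos (hbpos n))) ((d : ℝ) / 2)]
      norm_num
    rw [hcpow,
      show (-(π : ℂ) ^ 2 * ((‖y‖ : ℝ) : ℂ) ^ 2 / ((b n : ℝ) : ℂ))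
        = ((-π ^ 2 * ‖y‖ ^ 2 / b n : ℝ) : ℂ) by push_cast; ring,
      ← Complex.ofReal_exp, ht]
    push_cast
    ring
  have hre : FourierTransformInv.fourierInv (fun p => ((R p : ℝ) : ℂ)) x
      = ((∑' n : ℕ, t n : ℝ) : ℂ) := by
    rw [hswap, tsum_congr hint, ← Complex.ofReal_tsum]
  rw [hre, Complex.ofReal_re]
  have hsum_t : Summable t := by
    refine Summable.of_nonneg_of_le (fun n => (htpos n).le) ?_ hsummable_norm
    intro n
    rw [hH_norm_int n, ht]
    have hexp : Real.exp (-π ^ 2 * ‖y‖ ^ 2 / b n) ≤ 1 := by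
      rw [Real.exp_le_one_iff]
      apply div_nonpos_of_nonpos_of_nonneg ?_ (hbpos n).le
      nlinarith [sq_nonneg π, sq_nonneg ‖y‖, mul_nonneg (sq_nonneg π) (sq_nonneg ‖y‖)]
    have hpos1 : (0:ℝ) ≤ 2 * z ^ (n + 1) * (π / b n) ^ ((d : ℝ) / 2) := by
      have := Real.rpow_pos_of_pos (div_pos Real.pi_pos (hbpos n)) ((d : ℝ) / 2)
      nlinarith [pow_pos hz0 (n + 1)]
    calc 2 * z ^ (n + 1) * (π / b n) ^ ((d : ℝ) / 2) * Real.exp (-π ^ 2 * ‖y‖ ^ 2 / b n)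
        ≤ 2 * z ^ (n + 1) * (π / b n) ^ ((d : ℝ) / 2) * 1 :=
          mul_le_mul_of_nonneg_left hexp hpos1
      _ = 2 * z ^ (n + 1) * (π / b n) ^ ((d : ℝ) / 2) := by ring
  exact Summable.tsum_pos hsum_t (fun n => (htpos n).le) 0 (htpos 0)

end Fourier

end BoseAux

end

open MeasureTheory Real

/-- For the standard Bose gas (`E(p)=|p|²`), the kernel
`R̂(p) = 2 ∑_{n≥1} zⁿ e^{-βn|p|²}` is a Schwartz function and its inverse Fourier
transform is strictly positive everywhere. -/
theorem stmt1 (d : ℕ) (β z : ℝ) (hβ : 0 < β) (hz0 : 0 < z) (hz1 : z < 1) :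
    ∃ R : SchwartzMap (EuclideanSpace ℝ (Fin d)) ℝ,
      (∀ p, R p = 2 * ∑' n : ℕ, z ^ (n + 1) * Real.exp (-β * ((n : ℝ) + 1) * ‖p‖ ^ 2)) ∧
      ∀ x, 0 < (FourierTransformInv.fourierInv (fun p => ((R p : ℝ) : ℂ)) x).re := by
  refine ⟨BoseAux.RS d hβ hz0 hz1, ?_, ?_⟩
  · intro p
    rw [BoseAux.RS_apply p hβ hz0 hz1]
    exact BoseAux.phif_eq_tsum hβ hz0 hz1 (‖p‖ ^ 2) (by positivity)
  · intro x
    apply BoseAux.fourier_pos hβ hz0 hz1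
    intro p
    rw [BoseAux.RS_apply p hβ hz0 hz1]
    exact BoseAux.phif_eq_tsum hβ hz0 hz1 (‖p‖ ^ 2) (by positivity)
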